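/- (Composition closure, formal version.) If a weight m is FdB with constant λ, then for formal power series g, h over ℂ without constant term, the coefficients of g∘h satisfy |(g∘h)_n| / m_n ≤ λ^n Σ_{l≥1} (|g_l|/m_l) ρ_l(n), where ρ_l(n) = Σ_{k_1+⋯+k_l=n, k_i≥1} Π (|h_{k_i}|/m_{k_i}); consequently, if Σ_n (|g_n|/m_n) r^n < ∞ and Σ_n (|h_n|/m_n) (λr')^n ≤ ρ < r for some r, r' > 0, then Σ_n (|(g∘h)_n|/m_n) (r')^n ≤ Σ_l (|g_l|/m_l) ρ^l < ∞. -/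

import Mathlib

open scoped ENNReal

/-- tsum over tuples equals power. -/
lemma aux_tsum_pi_pow (A : ℕ → ℝ≥0∞) : ∀ l : ℕ,
    (∑' t : Fin l → ℕ, ∏ i, A (t i)) = (∑' k, A k) ^ l := by
  intro l
  induction l with
  | zero =>
    rw [tsum_eq_single (fun i => 0) (by intro b hb; exact (hb (Subsingleton.elim _ _)).elim)]
    simp
  | succ l ih =>
    rw [← (Fin.consEquiv (fun _ : Fin (l+1) => ℕ)).tsum_eq]
    have : ∀ p : ℕ × (Fin l → ℕ),
        (∏ i, A ((Fin.consEquiv (fun _ : Fin (l+1) => ℕ)) p i)) = A p.1 * ∏ i, A (p.2 i) := by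
      rintro ⟨a, t⟩
      rw [Fin.prod_univ_succ]
      simp [Fin.consEquiv]
    rw [tsum_congr this, ENNReal.tsum_prod']
    simp_rw [ENNReal.tsum_mul_left, ENNReal.tsum_mul_right]
    rw [ih, pow_succ, mul_comm]

lemma aux_comp_le (φ : ℕ → ℝ≥0∞) (l : ℕ) :
    (∑' n : ℕ, ∑ p ∈ Finset.univ.filter (fun p : Composition n => p.length = l),
        ∏ i, φ (p.blocksFun i)) ≤ (∑' k, φ k) ^ l := by
  have step1 : ∀ n : ℕ,
      (∑ p ∈ Finset.univ.filter (fun p : Composition n => p.length = l),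
        ∏ i, φ (p.blocksFun i))
      = ∑' q : {p : Composition n // p.length = l}, ∏ i, φ ((q : Composition n).blocksFun i) := by
    intro n
    rw [tsum_fintype]
    exact (Finset.sum_subtype _ (by simp) _)
  calc (∑' n : ℕ, ∑ p ∈ Finset.univ.filter (fun p : Composition n => p.length = l),
        ∏ i, φ (p.blocksFun i))
      = ∑' q : (Σ n : ℕ, {p : Composition n // p.length = l}),
          ∏ i, φ ((q.2 : Composition q.1).blocksFun i) := by
        rw [ENNReal.tsum_sigma']
        exact tsum_congr step1
    _ ≤ ∑' t : Fin l → ℕ, ∏ i, φ (t i) := by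
        have hinj : Function.Injective
            (fun q : (Σ n : ℕ, {p : Composition n // p.length = l}) =>
              (fun i : Fin l => (q.2 : Composition q.1).blocksFun (Fin.cast q.2.2.symm i))) := by
          rintro ⟨n, p, hp⟩ ⟨n', p', hp'⟩ hEq
          simp only at hEq
          have hb : p.blocks = p'.blocks := by
            rw [← Composition.ofFn_blocksFun p, ← Composition.ofFn_blocksFun p',
              List.ofFn_congr hp p.blocksFun, List.ofFn_congr hp' p'.blocksFun, hEq]
          have hs : (⟨n, p⟩ : Σ n, Composition n) = ⟨n', p'⟩ :=
            Composition.sigma_eq_iff_blocks_eq.2 hb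
          obtain ⟨rfl, hpe⟩ := Sigma.mk.inj_iff.1 hs
          rw [heq_iff_eq] at hpe
          subst hpe
          rfl
        have := ENNReal.tsum_comp_le_tsum_of_injective hinj (fun t => ∏ i, φ (t i))
        refine le_trans (le_of_eq ?_) this
        refine tsum_congr ?_
        rintro ⟨n, p, hp⟩
        exact (Fin.prod_congr' (fun i : Fin p.length => φ (p.blocksFun i)) hp.symm).symm
    _ = (∑' k, φ k) ^ l := aux_tsum_pi_pow φ l

/-- Composition closure, formal version: for an FdB weight `m` and formal power
series `g`, `h` without constant term, the coefficients of `g ∘ h` are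
controlled, and the weighted majorant series of `g ∘ h` converges whenever the
majorants of `g` and `h` do (with appropriately related radii). -/
theorem stmt_15 (m : ℕ → ℝ) (hm : ∀ n, 1 ≤ n → 0 < m n)
    (lam : ℝ) (hlam : 1 ≤ lam)
    (hfdb : ∀ ks : List ℕ, ks ≠ [] → (∀ i ∈ ks, 1 ≤ i) →
      m ks.length * (ks.map m).prod ≤ lam ^ ks.sum * m ks.sum)
    (g h : ℕ → ℂ) (hg0 : g 0 = 0) (hh0 : h 0 = 0)
    (c : ℕ → ℂ)
    (hc : ∀ n : ℕ, c n = ∑ p : Composition n, g p.length * ∏ i, h (p.blocksFun i))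
    (ρfun : ℕ → ℕ → ℝ)
    (hρfun : ∀ l n : ℕ, ρfun l n =
      ∑ p ∈ Finset.univ.filter (fun p : Composition n => p.length = l),
        ∏ i, ‖h (p.blocksFun i)‖ / m (p.blocksFun i)) :
    (∀ n, 1 ≤ n → ‖c n‖ / m n ≤
      lam ^ n * ∑ l ∈ Finset.Icc 1 n, (‖g l‖ / m l) * ρfun l n) ∧
    (∀ r r' ρ : ℝ, 0 < r' → 0 ≤ ρ → ρ < r →
      Summable (fun n : ℕ => ‖g n‖ / m n * r ^ n) →
      Summable (fun n : ℕ => ‖h n‖ / m n * (lam * r') ^ n) →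
      (∑' n : ℕ, ‖h n‖ / m n * (lam * r') ^ n) ≤ ρ →
      Summable (fun n : ℕ => ‖c n‖ / m n * r' ^ n) ∧
      (∑' n : ℕ, ‖c n‖ / m n * r' ^ n) ≤
        ∑' l : ℕ, ‖g l‖ / m l * ρ ^ l) := by
  have hratio_nonneg : ∀ (n : ℕ) (p : Composition n) (i : Fin p.length),
      0 ≤ ‖h (p.blocksFun i)‖ / m (p.blocksFun i) := by
    intro n p i
    exact div_nonneg (norm_nonneg _) (hm _ (p.one_le_blocksFun i)).le
  have hρnn : ∀ l n, 0 ≤ ρfun l n := by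
    intro l n
    rw [hρfun]
    exact Finset.sum_nonneg fun p _ => Finset.prod_nonneg fun i _ => hratio_nonneg n p i
  have hb_nonneg : ∀ l, 0 ≤ ‖g l‖ / m l := by
    intro l
    rcases Nat.eq_zero_or_pos l with rfl | hl
    · simp [hg0]
    · exact div_nonneg (norm_nonneg _) (hm l hl).le
  have hprodm_pos : ∀ (n : ℕ) (p : Composition n), 0 < ∏ i, m (p.blocksFun i) := by
    intro n p
    exact Finset.prod_pos fun i _ => hm _ (p.one_le_blocksFun i)
  -- key FdB bound for each composition
  have hfdb' : ∀ (n : ℕ) (p : Composition n), 1 ≤ n →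
      m p.length * ∏ i, m (p.blocksFun i) ≤ lam ^ n * m n := by
    intro n p hn
    have hne : p.blocks ≠ [] := by
      intro hnil
      have := p.blocks_sum
      rw [hnil] at this
      simp at this
      omega
    have := hfdb p.blocks hne (fun i hi => p.one_le_blocks hi)
    rw [← Composition.ofFn_blocksFun p, List.map_ofFn, List.prod_ofFn, List.length_ofFn,
      List.sum_ofFn] at this
    simpa [Composition.sum_blocksFun, Function.comp] using this
  have part1 : ∀ n, 1 ≤ n → ‖c n‖ / m n ≤
      lam ^ n * ∑ l ∈ Finset.Icc 1 n, (‖g l‖ / m l) * ρfun l n := by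
    intro n hn
    have hmn := hm n hn
    rw [div_le_iff₀ hmn, hc n]
    calc ‖∑ p : Composition n, g p.length * ∏ i, h (p.blocksFun i)‖
        ≤ ∑ p : Composition n, ‖g p.length‖ * ∏ i, ‖h (p.blocksFun i)‖ := by
          refine le_trans (norm_sum_le _ _) (le_of_eq ?_)
          refine Finset.sum_congr rfl fun p _ => ?_
          rw [norm_mul, norm_prod]
      _ = ∑ l ∈ Finset.Icc 1 n, ∑ p ∈ Finset.univ.filter (fun p : Composition n => p.length = l),
            ‖g p.length‖ * ∏ i, ‖h (p.blocksFun i)‖ := by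
          refine (Finset.sum_fiberwise_of_maps_to (fun p _ => ?_) _).symm
          exact Finset.mem_Icc.2 ⟨p.length_pos_of_pos (by omega), p.length_le⟩
      _ ≤ ∑ l ∈ Finset.Icc 1 n, (‖g l‖ / m l) * ρfun l n * (lam ^ n * m n) := by
          refine Finset.sum_le_sum fun l hl => ?_
          obtain ⟨hl1, hln⟩ := Finset.mem_Icc.1 hl
          rw [hρfun, Finset.mul_sum, Finset.sum_mul]
          refine Finset.sum_le_sum fun p hp => ?_
          have hpl : p.length = l := (Finset.mem_filter.1 hp).2
          subst hpl
          have hml : 0 < m p.length := hm _ hl1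
          have hsplit : (∏ i, ‖h (p.blocksFun i)‖) =
              (∏ i, ‖h (p.blocksFun i)‖ / m (p.blocksFun i)) *
                ∏ i, m (p.blocksFun i) := by
            rw [← Finset.prod_mul_distrib]
            exact Finset.prod_congr rfl fun i _ =>
              (div_mul_cancel₀ _ (hm _ (p.one_le_blocksFun i)).ne').symm
          have h1 : (∏ i, m (p.blocksFun i)) ≤ lam ^ n * m n / m p.length := by
            rw [le_div_iff₀ hml, mul_comm]
            exact hfdb' n p hn
          have hRnn : 0 ≤ ‖g p.length‖ *
              ∏ i, ‖h (p.blocksFun i)‖ / m (p.blocksFun i) :=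
            mul_nonneg (norm_nonneg _)
              (Finset.prod_nonneg fun i _ => hratio_nonneg n p i)
          have key := mul_le_mul_of_nonneg_left h1 hRnn
          calc ‖g p.length‖ * ∏ i, ‖h (p.blocksFun i)‖
              = ‖g p.length‖ *
                  (∏ i, ‖h (p.blocksFun i)‖ / m (p.blocksFun i)) *
                  ∏ i, m (p.blocksFun i) := by rw [hsplit]; ring
            _ ≤ ‖g p.length‖ *
                  (∏ i, ‖h (p.blocksFun i)‖ / m (p.blocksFun i)) *
                  (lam ^ n * m n / m p.length) := key
            _ = ‖g p.length‖ / m p.length *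
                  (∏ i, ‖h (p.blocksFun i)‖ / m (p.blocksFun i)) *
                  (lam ^ n * m n) := by ring
      _ = lam ^ n * (∑ l ∈ Finset.Icc 1 n, (‖g l‖ / m l) * ρfun l n) * m n := by
          rw [← Finset.sum_mul]
          ring
  refine ⟨part1, ?_⟩
  intro r r' ρ hr' hρ0 hρr hgsum hgsumH hhle
  set x : ℝ := lam * r' with hxdef
  have hx0 : 0 < x := mul_pos (lt_of_lt_of_le one_pos hlam) hr'
  have hφnn : ∀ k, 0 ≤ ‖h k‖ / m k * x ^ k := by
    intro k
    rcases Nat.eq_zero_or_pos k with rfl | hk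
    · simp [hh0]
    · exact mul_nonneg (div_nonneg (norm_nonneg _) (hm k hk).le) (pow_nonneg hx0.le _)
  set Φ : ℕ → ℝ≥0∞ := fun k => ENNReal.ofReal (‖h k‖ / m k * x ^ k) with hΦ
  have hS : (∑' k, Φ k) = ENNReal.ofReal (∑' k, ‖h k‖ / m k * x ^ k) :=
    (ENNReal.ofReal_tsum_of_nonneg hφnn hgsumH).symm
  have hSρ : (∑' k, Φ k) ≤ ENNReal.ofReal ρ := by
    rw [hS]; exact ENNReal.ofReal_le_ofReal hhle
  have claimA : ∀ l n : ℕ, ENNReal.ofReal (ρfun l n * x ^ n)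
      = ∑ p ∈ Finset.univ.filter (fun p : Composition n => p.length = l),
          ∏ i, Φ (p.blocksFun i) := by
    intro l n
    have heq : ρfun l n * x ^ n
        = ∑ p ∈ Finset.univ.filter (fun p : Composition n => p.length = l),
          ∏ i, (‖h (p.blocksFun i)‖ / m (p.blocksFun i) * x ^ (p.blocksFun i)) := by
      rw [hρfun, Finset.sum_mul]
      refine Finset.sum_congr rfl fun p _ => ?_
      rw [Finset.prod_mul_distrib, Finset.prod_pow_eq_pow_sum, p.sum_blocksFun]
    rw [heq, ENNReal.ofReal_sum_of_nonneg (fun p _ => Finset.prod_nonneg fun i _ => hφnn _)]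
    exact Finset.sum_congr rfl fun p _ => ENNReal.ofReal_prod_of_nonneg (fun i _ => hφnn _)
  have hc0 : c 0 = 0 := by
    rw [hc 0]
    refine Finset.sum_eq_zero fun p _ => ?_
    have hl0 : p.length = 0 := Nat.le_zero.1 p.length_le
    have hgl : g p.length = 0 := by rw [hl0]; exact hg0
    rw [hgl, zero_mul]
  have hfnn : ∀ n : ℕ, 0 ≤ ‖c n‖ / m n * r' ^ n := by
    intro n
    rcases Nat.eq_zero_or_pos n with rfl | hn
    · simp [hc0]
    · exact mul_nonneg (div_nonneg (norm_nonneg _) (hm n hn).le) (pow_nonneg hr'.le _)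
  have hstep : ∀ n : ℕ, ENNReal.ofReal (‖c n‖ / m n * r' ^ n)
      ≤ ∑' l : ℕ, ENNReal.ofReal (‖g l‖ / m l)
          * ENNReal.ofReal (ρfun l n * x ^ n) := by
    intro n
    rcases Nat.eq_zero_or_pos n with rfl | hn
    · simp [hc0]
    · have h1 : ‖c n‖ / m n * r' ^ n
          ≤ ∑ l ∈ Finset.Icc 1 n, ‖g l‖ / m l * (ρfun l n * x ^ n) := by
        calc ‖c n‖ / m n * r' ^ n
            ≤ (lam ^ n * ∑ l ∈ Finset.Icc 1 n, (‖g l‖ / m l) * ρfun l n) * r' ^ n :=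
              mul_le_mul_of_nonneg_right (part1 n hn) (pow_nonneg hr'.le n)
          _ = ∑ l ∈ Finset.Icc 1 n, ‖g l‖ / m l * (ρfun l n * x ^ n) := by
              rw [Finset.mul_sum, Finset.sum_mul]
              refine Finset.sum_congr rfl fun l _ => ?_
              rw [hxdef, mul_pow]
              ring
      refine le_trans (ENNReal.ofReal_le_ofReal h1) ?_
      rw [ENNReal.ofReal_sum_of_nonneg (fun l _ => mul_nonneg (hb_nonneg l)
        (mul_nonneg (hρnn _ _) (pow_nonneg hx0.le _)))]
      refine le_trans (le_of_eq (Finset.sum_congr rfl fun l _ =>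
        ENNReal.ofReal_mul (hb_nonneg l))) ?_
      exact ENNReal.sum_le_tsum _
  have hsumbρ : Summable (fun l : ℕ => ‖g l‖ / m l * ρ ^ l) := by
    refine Summable.of_nonneg_of_le (fun l => mul_nonneg (hb_nonneg l) (pow_nonneg hρ0 l))
      (fun l => ?_) hgsum
    exact mul_le_mul_of_nonneg_left (pow_le_pow_left₀ hρ0 hρr.le l) (hb_nonneg l)
  have hbρnn : ∀ l : ℕ, 0 ≤ ‖g l‖ / m l * ρ ^ l :=
    fun l => mul_nonneg (hb_nonneg l) (pow_nonneg hρ0 l)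
  have hT : (∑' l : ℕ, ENNReal.ofReal (‖g l‖ / m l * ρ ^ l))
      = ENNReal.ofReal (∑' l : ℕ, ‖g l‖ / m l * ρ ^ l) :=
    (ENNReal.ofReal_tsum_of_nonneg hbρnn hsumbρ).symm
  have hmain : (∑' n : ℕ, ENNReal.ofReal (‖c n‖ / m n * r' ^ n))
      ≤ ∑' l : ℕ, ENNReal.ofReal (‖g l‖ / m l * ρ ^ l) := by
    calc (∑' n : ℕ, ENNReal.ofReal (‖c n‖ / m n * r' ^ n))
        ≤ ∑' (n : ℕ) (l : ℕ), ENNReal.ofReal (‖g l‖ / m l)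
            * ENNReal.ofReal (ρfun l n * x ^ n) := ENNReal.tsum_le_tsum hstep
      _ = ∑' (l : ℕ), ENNReal.ofReal (‖g l‖ / m l)
            * ∑' (n : ℕ), ENNReal.ofReal (ρfun l n * x ^ n) := by
          rw [ENNReal.tsum_comm]
          exact tsum_congr fun l => ENNReal.tsum_mul_left
      _ ≤ ∑' (l : ℕ), ENNReal.ofReal (‖g l‖ / m l) * (∑' k, Φ k) ^ l := by
          refine ENNReal.tsum_le_tsum fun l => mul_le_mul_right ?_ _
          calc (∑' n : ℕ, ENNReal.ofReal (ρfun l n * x ^ n))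
              = ∑' n : ℕ, ∑ p ∈ Finset.univ.filter (fun p : Composition n => p.length = l),
                  ∏ i, Φ (p.blocksFun i) := tsum_congr fun n => claimA l n
            _ ≤ (∑' k, Φ k) ^ l := aux_comp_le Φ l
      _ ≤ ∑' (l : ℕ), ENNReal.ofReal (‖g l‖ / m l) * (ENNReal.ofReal ρ) ^ l :=
          ENNReal.tsum_le_tsum fun l => mul_le_mul_right (pow_le_pow_left' hSρ l) _
      _ = ∑' l : ℕ, ENNReal.ofReal (‖g l‖ / m l * ρ ^ l) := by
          refine tsum_congr fun l => ?_
          rw [← ENNReal.ofReal_pow hρ0, ← ENNReal.ofReal_mul (hb_nonneg l)]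
  have hne : (∑' n : ℕ, ENNReal.ofReal (‖c n‖ / m n * r' ^ n)) ≠ ⊤ :=
    ne_top_of_le_ne_top (by rw [hT]; exact ENNReal.ofReal_ne_top) hmain
  have hsf : Summable (fun n : ℕ => ‖c n‖ / m n * r' ^ n) := by
    have h2 : Summable (fun n : ℕ => (‖c n‖ / m n * r' ^ n).toNNReal) :=
      ENNReal.tsum_coe_ne_top_iff_summable.1 (by simpa [ENNReal.ofReal] using hne)
    exact (NNReal.summable_coe.2 h2).congr fun n => Real.coe_toNNReal _ (hfnn n)
  refine ⟨hsf, ?_⟩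
  have hofeq : ENNReal.ofReal (∑' n : ℕ, ‖c n‖ / m n * r' ^ n)
      = ∑' n : ℕ, ENNReal.ofReal (‖c n‖ / m n * r' ^ n) :=
    ENNReal.ofReal_tsum_of_nonneg hfnn hsf
  have hfin : ENNReal.ofReal (∑' n : ℕ, ‖c n‖ / m n * r' ^ n)
      ≤ ENNReal.ofReal (∑' l : ℕ, ‖g l‖ / m l * ρ ^ l) := by
    rw [hofeq, ← hT]
    exact hmain
  exact (ENNReal.ofReal_le_ofReal_iff (tsum_nonneg hbρnn)).1 hfin
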